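/- Fix q>0, k*>0, A>0 and define u_q(m) := ( (1/q)∫₀^∞ e^{-A·m·y/q}·(y+1)^{-(1+k*/q)} dy )^{-1}. Then for every m>0, k* + A·m < u_q(m) < k* + A·m + q. -/

import Mathlib

open Real MeasureTheory

lemma anh_strict_int {f g : ℝ → ℝ} (hf : IntegrableOn f (Set.Ioi 0))
    (hg : IntegrableOn g (Set.Ioi 0)) (hlt : ∀ y ∈ Set.Ioi (0:ℝ), f y < g y) :
    (∫ y in Set.Ioi (0:ℝ), f y) < ∫ y in Set.Ioi (0:ℝ), g y := by
  have hsub : IntegrableOn (fun y => g y - f y) (Set.Ioi 0) := hg.sub hf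
  have hpos : 0 < ∫ y in Set.Ioi (0:ℝ), (g y - f y) := by
    rw [setIntegral_pos_iff_support_of_nonneg_ae _ hsub]
    · refine lt_of_lt_of_le ?_ (measure_mono (Set.subset_inter (fun y hy => ?_)
        (le_refl (Set.Ioi 0))))
      · rw [Real.volume_Ioi]; exact ENNReal.zero_lt_top
      · exact sub_ne_zero_of_ne (hlt y hy).ne'
    · exact (ae_restrict_iff' measurableSet_Ioi).2 (ae_of_all _
        fun y hy => sub_nonneg.mpr (hlt y hy).le)
  rw [integral_sub hg hf] at hpos
  linarith

lemma anh_key (a b : ℝ) (ha : 0 < a) (hb : 0 < b) :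
    (a + b + 1)⁻¹ < (∫ y in Set.Ioi (0:ℝ), Real.exp (-(a*y)) * (y+1) ^ (-(1+b))) ∧
    (∫ y in Set.Ioi (0:ℝ), Real.exp (-(a*y)) * (y+1) ^ (-(1+b))) < (a + b)⁻¹ := by
  set f : ℝ → ℝ := fun y => Real.exp (-(a*y)) * (y+1) ^ (-(1+b)) with hfdef
  set g : ℝ → ℝ := fun y => (a+b)⁻¹ * (Real.exp (-(a*y)) * ((a*(y+1)+b) * (y+1) ^ (-(1+b)))) with hgdef
  set F : ℝ → ℝ := fun y => -((a+b)⁻¹ * (Real.exp (-(a*y)) * (y+1) ^ (-b))) with hFdef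
  set h : ℝ → ℝ := fun y => Real.exp (-((a+b+1)*y)) with hhdef
  set G : ℝ → ℝ := fun y => -((a+b+1)⁻¹ * Real.exp (-((a+b+1)*y))) with hGdef
  have hab : 0 < a + b := by linarith
  -- derivative of F is g on Ici 0
  have hFderiv : ∀ y ∈ Set.Ici (0:ℝ), HasDerivAt F (g y) y := by
    intro y hy
    have hy1 : (0:ℝ) < y + 1 := by simp only [Set.mem_Ici] at hy; linarith
    have d1 : HasDerivAt (fun y : ℝ => Real.exp (-(a*y))) (Real.exp (-(a*y)) * (-a)) y := by
      have : HasDerivAt (fun y : ℝ => -(a*y)) (-a) y := by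
        simpa using ((hasDerivAt_id y).const_mul a).fun_neg
      exact this.exp
    have d2 : HasDerivAt (fun y : ℝ => (y+1) ^ (-b)) ((-b) * (y+1) ^ (-b-1)) y := by
      have := (Real.hasDerivAt_rpow_const (x := y+1) (p := -b) (Or.inl hy1.ne')).comp y
        ((hasDerivAt_id y).add_const 1)
      simpa [Function.comp_def] using this
    have := ((d1.fun_mul d2).const_mul ((a+b)⁻¹)).fun_neg
    refine this.congr_deriv ?_
    have e1 : (y+1 : ℝ) ^ (-b) = (y+1) * (y+1) ^ (-(1+b)) := by
      rw [show (-b : ℝ) = 1 + (-(1+b)) by ring, Real.rpow_add hy1, Real.rpow_one]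
    have e2 : (y+1 : ℝ) ^ (-b-1) = (y+1) ^ (-(1+b)) := by ring_nf
    simp only [hgdef, e1, e2]
    ring
  have hgpos : ∀ y ∈ Set.Ioi (0:ℝ), 0 ≤ g y := by
    intro y hy
    have hy0 : (0:ℝ) < y := hy
    have ht : (0:ℝ) < (y+1) ^ (-(1+b)) := Real.rpow_pos_of_pos (by linarith) _
    have : (0:ℝ) < a*(y+1)+b := by nlinarith
    positivity
  have hFtop : Filter.Tendsto F Filter.atTop (nhds 0) := by
    have h1 : Filter.Tendsto (fun y : ℝ => Real.exp (-(a*y))) Filter.atTop (nhds 0) := by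
      apply Real.tendsto_exp_atBot.comp
      exact Filter.tendsto_neg_atTop_atBot.comp
        (Filter.Tendsto.const_mul_atTop ha Filter.tendsto_id)
    have h2 : Filter.Tendsto (fun y : ℝ => (y+1) ^ (-b)) Filter.atTop (nhds 0) :=
      (tendsto_rpow_neg_atTop hb).comp (Filter.tendsto_atTop_add_const_right _ 1 Filter.tendsto_id)
    have := ((h1.mul h2).const_mul ((a+b)⁻¹)).neg
    simpa using this
  have hgint : IntegrableOn g (Set.Ioi 0) :=
    integrableOn_Ioi_deriv_of_nonneg' hFderiv hgpos hFtop
  have hgval : (∫ y in Set.Ioi (0:ℝ), g y) = (a+b)⁻¹ := by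
    rw [integral_Ioi_of_hasDerivAt_of_nonneg' hFderiv hgpos hFtop]
    simp [hFdef]
  -- derivative of G is h on Ici 0
  have hab1 : 0 < a + b + 1 := by linarith
  have hGderiv : ∀ y ∈ Set.Ici (0:ℝ), HasDerivAt G (h y) y := by
    intro y _
    have : HasDerivAt (fun y : ℝ => -((a+b+1)*y)) (-(a+b+1)) y := by
      simpa using ((hasDerivAt_id y).const_mul (a+b+1)).fun_neg
    have := (this.exp.const_mul ((a+b+1)⁻¹)).fun_neg
    refine this.congr_deriv ?_
    simp only [hhdef]
    field_simp
  have hhpos : ∀ y ∈ Set.Ioi (0:ℝ), 0 ≤ h y := fun y _ => (Real.exp_pos _).le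
  have hGtop : Filter.Tendsto G Filter.atTop (nhds 0) := by
    have h1 : Filter.Tendsto (fun y : ℝ => Real.exp (-((a+b+1)*y))) Filter.atTop (nhds 0) := by
      apply Real.tendsto_exp_atBot.comp
      exact Filter.tendsto_neg_atTop_atBot.comp
        (Filter.Tendsto.const_mul_atTop hab1 Filter.tendsto_id)
    have := (h1.const_mul ((a+b+1)⁻¹)).neg
    simpa using this
  have hhint : IntegrableOn h (Set.Ioi 0) :=
    integrableOn_Ioi_deriv_of_nonneg' hGderiv hhpos hGtop
  have hhval : (∫ y in Set.Ioi (0:ℝ), h y) = (a+b+1)⁻¹ := by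
    rw [integral_Ioi_of_hasDerivAt_of_nonneg' hGderiv hhpos hGtop]
    simp [hGdef]
  -- pointwise inequalities
  have hfg : ∀ y ∈ Set.Ioi (0:ℝ), f y < g y := by
    intro y hy
    have hy0 : (0:ℝ) < y := hy
    have hy1 : (0:ℝ) < y + 1 := by linarith
    have ht : (0:ℝ) < (y+1) ^ (-(1+b)) := Real.rpow_pos_of_pos hy1 _
    have hE : (0:ℝ) < Real.exp (-(a*y)) := Real.exp_pos _
    have key : g y - f y = Real.exp (-(a*y)) * (y+1) ^ (-(1+b)) * ((a+b)⁻¹ * (a*y)) := by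
      simp only [hgdef, hfdef]
      field_simp
      ring
    have : 0 < g y - f y := by
      rw [key]
      exact mul_pos (mul_pos hE ht) (mul_pos (inv_pos.mpr hab) (mul_pos ha hy0))
    linarith
  have hhf : ∀ y ∈ Set.Ioi (0:ℝ), h y < f y := by
    intro y hy
    have hy0 : (0:ℝ) < y := hy
    have hy1 : (0:ℝ) < y + 1 := by linarith
    have h1 : y + 1 < Real.exp y := by
      have := Real.add_one_lt_exp (x := y) hy0.ne'
      linarith
    have h2 : (y+1) ^ (1+b) < Real.exp (y*(1+b)) := by
      rw [Real.exp_mul]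
      exact Real.rpow_lt_rpow hy1.le h1 (by linarith)
    have h3 : (Real.exp (y*(1+b)))⁻¹ < ((y+1) ^ (1+b))⁻¹ := by
      apply inv_strictAnti₀ (Real.rpow_pos_of_pos hy1 _) h2
    have h4 : Real.exp (-(y*(1+b))) < (y+1) ^ (-(1+b)) := by
      rwa [Real.exp_neg, Real.rpow_neg hy1.le]
    have h5 : h y = Real.exp (-(a*y)) * Real.exp (-(y*(1+b))) := by
      rw [hhdef, ← Real.exp_add]
      ring_nf
    rw [h5, hfdef]
    exact mul_lt_mul_of_pos_left h4 (Real.exp_pos _)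
  -- integrability of f
  have hfmeas : AEStronglyMeasurable f (volume.restrict (Set.Ioi 0)) := by
    apply ContinuousOn.aestronglyMeasurable _ measurableSet_Ioi
    apply ContinuousOn.mul
    · exact (Real.continuous_exp.comp (continuous_const.mul continuous_id).neg).continuousOn
    · exact ((continuous_id.add continuous_const).continuousOn).rpow_const
        fun y hy => Or.inl (by simp only [Set.mem_Ioi] at hy; simp; positivity)
  have hfint : IntegrableOn f (Set.Ioi 0) := by
    apply hgint.mono' hfmeas
    refine (ae_restrict_iff' measurableSet_Ioi).2 (ae_of_all _ fun y hy => ?_)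
    have hy1 : (0:ℝ) < y + 1 := by simp only [Set.mem_Ioi] at hy; linarith
    have : 0 ≤ f y := mul_nonneg (Real.exp_pos _).le (Real.rpow_pos_of_pos hy1 _).le
    rw [Real.norm_eq_abs, abs_of_nonneg this]
    exact (hfg y hy).le
  constructor
  · rw [← hhval]; exact anh_strict_int hhint hfint hhf
  · rw [← hgval]; exact anh_strict_int hfint hgint hfg

/-- The bounds (ANHbound): `k* + A·m < u_q(m) < k* + A·m + q` for all `m > 0`. -/
theorem anh_ode_bounds
    (q kstar A : ℝ) (hq : 0 < q) (hk : 0 < kstar) (hA : 0 < A)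
    (u : ℝ → ℝ)
    (hu : ∀ m : ℝ, u m = (1 / q * ∫ y in Set.Ioi (0 : ℝ),
        Real.exp (-(A * m * y) / q) * (y + 1) ^ (-(1 + kstar / q)))⁻¹) :
    ∀ m : ℝ, 0 < m → kstar + A * m < u m ∧ u m < kstar + A * m + q := by
  intro m hm
  set a : ℝ := A * m / q with hadef
  set b : ℝ := kstar / q with hbdef
  have ha : 0 < a := by positivity
  have hb : 0 < b := by positivity
  have hint_eq : (∫ y in Set.Ioi (0 : ℝ),
      Real.exp (-(A * m * y) / q) * (y + 1) ^ (-(1 + kstar / q)))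
      = ∫ y in Set.Ioi (0:ℝ), Real.exp (-(a*y)) * (y+1) ^ (-(1+b)) := by
    apply setIntegral_congr_fun measurableSet_Ioi
    intro y _
    have : -(A * m * y) / q = -(a * y) := by
      rw [hadef]; field_simp
    dsimp only
    rw [this]
  obtain ⟨hlow, hhigh⟩ := anh_key a b ha hb
  set I : ℝ := ∫ y in Set.Ioi (0:ℝ), Real.exp (-(a*y)) * (y+1) ^ (-(1+b)) with hIdef
  have hI0 : 0 < I := lt_trans (by positivity) hlow
  have hum : u m = q / I := by
    rw [hu m, hint_eq, mul_inv, one_div, inv_inv, ← div_eq_mul_inv]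
  have habq : a + b = (kstar + A * m) / q := by
    rw [hadef, hbdef]; field_simp; ring
  have hab1q : a + b + 1 = (kstar + A * m + q) / q := by
    rw [hadef, hbdef]; field_simp; ring
  have hkam : 0 < kstar + A * m := by nlinarith
  constructor
  · rw [hum, lt_div_iff₀ hI0]
    rw [habq, inv_div] at hhigh
    rw [lt_div_iff₀ hkam] at hhigh
    nlinarith
  · rw [hum, div_lt_iff₀ hI0]
    rw [hab1q, inv_div] at hlow
    rw [div_lt_iff₀ (by linarith : (0:ℝ) < kstar + A * m + q)] at hlow
    nlinarith
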